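/- Let p ∈ [2, ∞), q = p/(p−1), and B > 0. Let Y ∈ ℝ^d with ‖Y‖_q ≤ B, and let Q(Y) be the average of k = d^{2/p} (assumed a positive integer) independent copies of SimQ applied to Y with scale parameter B·d^{1/p} (i.e., each copy outputs B·d^{1/p}·sign(Y(i))·e_i with probability |Y(i)|/(B·d^{1/p}), and 0 otherwise). Then E[Q(Y)] = Y and E[‖Q(Y)‖₂²] ≤ (d^{2/p}·B²)/k + B² = 2B². -/

import Mathlib

open MeasureTheory ProbabilityTheory

/-- Discrete σ-algebra on the finite index alphabet. -/
instance (n : ℕ) : MeasurableSpace (Option (Fin n)) := ⊤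

private lemma aux_sum_rpow_le {ι : Type*} (s : Finset ι) (a : ι → ℝ) (ha : ∀ i, 0 ≤ a i)
    {t : ℝ} (ht : 1 ≤ t) : ∑ i ∈ s, a i ^ t ≤ (∑ i ∈ s, a i) ^ t := by
  have hS : 0 ≤ ∑ i ∈ s, a i := Finset.sum_nonneg fun i _ => ha i
  have h1 : ∑ i ∈ s, a i ^ t ≤ ∑ i ∈ s, a i * (∑ j ∈ s, a j) ^ (t - 1) := by
    refine Finset.sum_le_sum fun i hi => ?_
    rcases eq_or_lt_of_le (ha i) with h | h
    · rw [← h, Real.zero_rpow (by linarith)]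
      positivity
    · have hle : a i ≤ ∑ j ∈ s, a j := Finset.single_le_sum (fun j _ => ha j) hi
      have e : a i ^ t = a i ^ ((1:ℝ) + (t - 1)) := by norm_num
      rw [Real.rpow_add h, Real.rpow_one] at e
      rw [e]
      exact mul_le_mul_of_nonneg_left
        (Real.rpow_le_rpow h.le hle (by linarith)) (ha i)
  refine h1.trans ?_
  rw [← Finset.sum_mul]
  have e2 : (∑ i ∈ s, a i) ^ t = (∑ i ∈ s, a i) ^ ((1:ℝ) + (t - 1)) := by norm_num
  rw [e2, Real.rpow_add' hS (by norm_num; linarith), Real.rpow_one]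

/-- SimQ⁺: the average of `k = d^{2/p}` independent copies of SimQ with scale
`B·d^{1/p}` is unbiased and has second moment at most `d^{2/p}B²/k + B² = 2B²`. -/
theorem simq_plus
    (d k : ℕ) (hd : 0 < d) (hk : 0 < k) (p : ℝ) (hp : 2 ≤ p)
    (q B : ℝ) (hq : q = p / (p - 1)) (hB : 0 < B)
    (hkd : (k : ℝ) = (d : ℝ) ^ (2 / p))
    (Y : EuclideanSpace ℝ (Fin d)) (hY : (∑ i, |Y i| ^ q) ^ (1 / q) ≤ B)
    {Ω : Type*} [MeasurableSpace Ω] (μ : Measure Ω) [IsProbabilityMeasure μ]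
    (I : Fin k → Ω → Option (Fin d))
    (hmeas : ∀ j, Measurable (I j))
    (hindep : iIndepFun I μ)
    (hI : ∀ j, ∀ i : Fin d,
      μ (I j ⁻¹' {some i}) = ENNReal.ofReal (|Y i| / (B * (d : ℝ) ^ (1 / p))))
    (Q : Ω → EuclideanSpace ℝ (Fin d))
    (hQ : ∀ ω, Q ω = (k : ℝ)⁻¹ • ∑ j, Option.elim (I j ω) 0
      (fun i => (B * (d : ℝ) ^ (1 / p) * (if 0 ≤ Y i then (1 : ℝ) else -1)) •
        EuclideanSpace.single i (1 : ℝ)))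
    (hint1 : Integrable Q μ) (hint2 : Integrable (fun ω => ‖Q ω‖ ^ 2) μ) :
    ∫ ω, Q ω ∂μ = Y
      ∧ ∫ ω, ‖Q ω‖ ^ 2 ∂μ ≤ (d : ℝ) ^ (2 / p) * B ^ 2 / k + B ^ 2
      ∧ ∫ ω, ‖Q ω‖ ^ 2 ∂μ ≤ 2 * B ^ 2 := by
  classical
  have hd0 : (0:ℝ) < d := by exact_mod_cast hd
  have hk0 : (0:ℝ) < k := by exact_mod_cast hk
  have hkne : (k:ℝ) ≠ 0 := ne_of_gt hk0
  have hp0 : 0 < p := by linarith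
  have hp1 : 1 < p := by linarith
  have hq0 : 0 < q := by rw [hq]; exact div_pos (by linarith) (by linarith)
  have hq1 : 1 ≤ q := by
    rw [hq]; rw [le_div_iff₀ (by linarith)]; linarith
  have hq2 : q ≤ 2 := by
    rw [hq]; rw [div_le_iff₀ (by linarith)]; linarith
  set M := B * (d : ℝ) ^ (1 / p) with hMdef
  have hdp : 0 < (d:ℝ) ^ (1 / p) := Real.rpow_pos_of_pos hd0 _
  have hM : 0 < M := mul_pos hB hdp
  have hMne : M ≠ 0 := ne_of_gt hM
  -- measurability of the elementary events
  have hAmeas : ∀ (j : Fin k) (l : Fin d), MeasurableSet (I j ⁻¹' {some l}) :=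
    fun j l => hmeas j trivial
  have hμA : ∀ (j : Fin k) (l : Fin d), (μ (I j ⁻¹' {some l})).toReal = |Y l| / M := by
    intro j l
    rw [hI j l, ENNReal.toReal_ofReal (by positivity)]
  -- the scalar component random variables
  set ξ : Fin d → Fin k → Ω → ℝ := fun l j ω =>
    Set.indicator (I j ⁻¹' {some l}) (fun _ => M * (if 0 ≤ Y l then (1:ℝ) else -1)) ω
    with hξdef
  have hsgn : ∀ l : Fin d, |Y l| * (if 0 ≤ Y l then (1:ℝ) else -1) = Y l := by
    intro l
    rcases le_or_gt 0 (Y l) with h | h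
    · rw [if_pos h, abs_of_nonneg h, mul_one]
    · rw [if_neg (not_le.2 h), abs_of_neg h]; ring
  -- componentwise description of the summands
  have helim : ∀ (j : Fin k) (ω : Ω) (l : Fin d),
      (Option.elim (I j ω) 0
        (fun i => (M * (if 0 ≤ Y i then (1 : ℝ) else -1)) •
          EuclideanSpace.single i (1 : ℝ)) : EuclideanSpace ℝ (Fin d)) l = ξ l j ω := by
    intro j ω l
    cases h : I j ω with
    | none =>
      simp [hξdef, Set.indicator_apply, Set.mem_preimage, h]
    | some i =>
      have hmem : ω ∈ I j ⁻¹' {some l} ↔ i = l := by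
        simp [Set.mem_preimage, h]
      have hLHS : ((M * (if 0 ≤ Y i then (1:ℝ) else -1)) •
          EuclideanSpace.single i (1:ℝ) : EuclideanSpace ℝ (Fin d)) l
          = (M * (if 0 ≤ Y i then (1:ℝ) else -1)) * (if l = i then 1 else 0) := by
        rw [PiLp.smul_apply, EuclideanSpace.single_apply, smul_eq_mul]
      simp only [hξdef, Option.elim]
      rw [hLHS, Set.indicator_apply]
      by_cases hil : i = l
      · subst hil
        rw [if_pos (hmem.mpr rfl), if_pos rfl, mul_one]
      · rw [if_neg (fun hc => hil (hmem.mp hc)), if_neg (fun hc : l = i => hil hc.symm),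
          mul_zero]
  have hcomp : ∀ (ω : Ω) (l : Fin d), Q ω l = (k:ℝ)⁻¹ * ∑ j, ξ l j ω := by
    intro ω l
    rw [hQ ω]
    rw [PiLp.smul_apply, smul_eq_mul]
    congr 1
    rw [show ((∑ j, Option.elim (I j ω) 0
        (fun i => (M * (if 0 ≤ Y i then (1 : ℝ) else -1)) •
          EuclideanSpace.single i (1 : ℝ)) : EuclideanSpace ℝ (Fin d)) l)
        = ∑ j, (Option.elim (I j ω) 0
        (fun i => (M * (if 0 ≤ Y i then (1 : ℝ) else -1)) •
          EuclideanSpace.single i (1 : ℝ)) : EuclideanSpace ℝ (Fin d)) l from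
      by rw [WithLp.ofLp_sum, Finset.sum_apply]]
    exact Finset.sum_congr rfl fun j _ => helim j ω l
  -- integrability and integrals of the ξ's
  have hξmeas : ∀ l j, Measurable (ξ l j) := by
    intro l j
    simp only [hξdef]
    exact measurable_const.indicator (hAmeas j l)
  have hξint : ∀ l j, Integrable (ξ l j) μ := by
    intro l j
    simp only [hξdef]
    exact (integrable_const _).indicator (hAmeas j l)
  have hξbdd : ∀ l j ω, ‖ξ l j ω‖ ≤ M := by
    intro l j ω
    simp only [hξdef]
    rcases Set.indicator_eq_zero_or_self (I j ⁻¹' {some l})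
      (fun _ => M * (if 0 ≤ Y l then (1:ℝ) else -1)) ω with h | h
    · rw [h]; simpa using hM.le
    · rw [h, Real.norm_eq_abs]
      rcases le_or_gt 0 (Y l) with h' | h'
      · rw [if_pos h']; simp [abs_of_pos hM]
      · rw [if_neg (not_le.2 h')]
        rw [abs_mul, abs_of_pos hM]
        simp
  have hξE : ∀ l j, ∫ ω, ξ l j ω ∂μ = Y l := by
    intro l j
    simp only [hξdef]
    rw [integral_indicator_const _ (hAmeas j l), measureReal_def, hμA j l, smul_eq_mul]
    have e : |Y l| / M * (M * (if 0 ≤ Y l then (1:ℝ) else -1))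
        = |Y l| * (if 0 ≤ Y l then (1:ℝ) else -1) * (M / M) := by ring
    rw [e, div_self hMne, mul_one, hsgn l]
  have hξprod_int : ∀ l j j', Integrable (fun ω => ξ l j ω * ξ l j' ω) μ := by
    intro l j j'
    exact (hξint l j').bdd_mul (hξmeas l j).aestronglyMeasurable (ae_of_all _ (hξbdd l j))
  -- diagonal second moments
  have hξdiag : ∀ l j, ∫ ω, ξ l j ω * ξ l j ω ∂μ = M * |Y l| := by
    intro l j
    have hrw : (fun ω => ξ l j ω * ξ l j ω) = Set.indicator (I j ⁻¹' {some l})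
        (fun _ => (M * (if 0 ≤ Y l then (1:ℝ) else -1)) *
          (M * (if 0 ≤ Y l then (1:ℝ) else -1))) := by
      funext ω
      simp only [hξdef]
      by_cases hω : ω ∈ I j ⁻¹' {some l} <;> simp [Set.indicator_apply, hω]
    rw [hrw, integral_indicator_const _ (hAmeas j l), measureReal_def, hμA j l, smul_eq_mul]
    have hss : (if 0 ≤ Y l then (1:ℝ) else -1) * (if 0 ≤ Y l then (1:ℝ) else -1) = 1 := by
      split_ifs <;> norm_num
    rw [show (M * (if 0 ≤ Y l then (1:ℝ) else -1)) * (M * (if 0 ≤ Y l then (1:ℝ) else -1))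
        = M * M * ((if 0 ≤ Y l then (1:ℝ) else -1) * (if 0 ≤ Y l then (1:ℝ) else -1)) by ring,
      hss, mul_one]
    field_simp
  -- off-diagonal: independence
  have hξoff : ∀ l j j', j ≠ j' → ∫ ω, ξ l j ω * ξ l j' ω ∂μ = Y l * Y l := by
    intro l j j' hjj'
    have hφ : ∀ j'' : Fin k, ξ l j'' =
        (fun o : Option (Fin d) =>
          Set.indicator {some l} (fun _ => M * (if 0 ≤ Y l then (1:ℝ) else -1)) o) ∘ I j'' := by
      intro j''
      funext ω
      simp only [hξdef, Function.comp_apply]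
      rw [Set.indicator_apply, Set.indicator_apply]
      simp [Set.mem_preimage]
    have hindep2 : IndepFun (ξ l j) (ξ l j') μ := by
      rw [hφ j, hφ j']
      exact (hindep.indepFun hjj').comp measurable_from_top measurable_from_top
    have hmul := hindep2.integral_mul_eq_mul_integral (hξint l j).aestronglyMeasurable
      (hξint l j').aestronglyMeasurable
    calc ∫ ω, ξ l j ω * ξ l j' ω ∂μ = ∫ ω, (ξ l j * ξ l j') ω ∂μ := rfl
      _ = (∫ ω, ξ l j ω ∂μ) * ∫ ω, ξ l j' ω ∂μ := hmul
      _ = Y l * Y l := by rw [hξE, hξE]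
  -- first moment
  have hEQ : ∫ ω, Q ω ∂μ = Y := by
    ext l
    have h1 : (∫ ω, Q ω ∂μ) l = EuclideanSpace.proj (𝕜 := ℝ) l (∫ ω, Q ω ∂μ) := rfl
    rw [h1, ← ContinuousLinearMap.integral_comp_comm _ hint1]
    have h2 : ∀ ω, EuclideanSpace.proj (𝕜 := ℝ) l (Q ω) = (k:ℝ)⁻¹ * ∑ j, ξ l j ω := by
      intro ω
      rw [show EuclideanSpace.proj (𝕜 := ℝ) l (Q ω) = Q ω l from rfl, hcomp ω l]
    simp_rw [h2]
    rw [integral_const_mul, integral_finset_sum _ (fun j _ => hξint l j)]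
    simp_rw [hξE]
    rw [Finset.sum_const, Finset.card_univ, Fintype.card_fin, nsmul_eq_mul]
    field_simp
  -- pointwise expansion of the squared norm
  have hnorm : ∀ ω, ‖Q ω‖^2 = ((k:ℝ)⁻¹)^2 * ∑ l, ∑ j, ∑ j', ξ l j ω * ξ l j' ω := by
    intro ω
    have h1 : ‖Q ω‖^2 = ∑ l, (Q ω l)^2 := by
      rw [EuclideanSpace.norm_eq, Real.sq_sqrt (by positivity)]
      exact Finset.sum_congr rfl fun l _ => by rw [Real.norm_eq_abs, sq_abs]
    rw [h1]
    calc ∑ l, (Q ω l)^2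
        = ∑ l, ((k:ℝ)⁻¹)^2 * ((∑ j, ξ l j ω) * (∑ j', ξ l j' ω)) := by
          refine Finset.sum_congr rfl fun l _ => ?_
          rw [hcomp ω l]; ring
      _ = ((k:ℝ)⁻¹)^2 * ∑ l, ∑ j, ∑ j', ξ l j ω * ξ l j' ω := by
          rw [Finset.mul_sum]
          refine Finset.sum_congr rfl fun l _ => ?_
          rw [Finset.sum_mul_sum]
  -- the second moment integral
  have hEQ2 : ∫ ω, ‖Q ω‖^2 ∂μ
      = ((k:ℝ)⁻¹)^2 * ∑ l, ∑ j, ∑ j', ∫ ω, ξ l j ω * ξ l j' ω ∂μ := by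
    simp_rw [hnorm]
    rw [integral_const_mul]
    rw [integral_finset_sum _ (fun l _ => integrable_finset_sum _
      (fun j _ => integrable_finset_sum _ (fun j' _ => hξprod_int l j j')))]
    congr 1
    refine Finset.sum_congr rfl fun l _ => ?_
    rw [integral_finset_sum _ (fun j _ => integrable_finset_sum _
      (fun j' _ => hξprod_int l j j'))]
    refine Finset.sum_congr rfl fun j _ => ?_
    rw [integral_finset_sum _ (fun j' _ => hξprod_int l j j')]
  -- evaluate the double sum
  have hval : ∀ l, ∑ j : Fin k, ∑ j' : Fin k, ∫ ω, ξ l j ω * ξ l j' ω ∂μ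
      = (k:ℝ) * (M * |Y l|) + ((k:ℝ)^2 - k) * (Y l * Y l) := by
    intro l
    have hcase : ∀ j j' : Fin k, ∫ ω, ξ l j ω * ξ l j' ω ∂μ
        = if j = j' then M * |Y l| else Y l * Y l := by
      intro j j'
      by_cases h : j = j'
      · subst h; rw [if_pos rfl]; exact hξdiag l j
      · rw [if_neg h]; exact hξoff l j j' h
    simp_rw [hcase]
    have h1 : ∀ j : Fin k, ∑ j' : Fin k, (if j = j' then M * |Y l| else Y l * Y l)
        = (k:ℝ) * (Y l * Y l) + (M * |Y l| - Y l * Y l) := by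
      intro j
      have hsplit : ∀ j' : Fin k, (if j = j' then M * |Y l| else Y l * Y l)
          = Y l * Y l + (if j = j' then M * |Y l| - Y l * Y l else 0) := by
        intro j'; split_ifs <;> ring
      simp_rw [hsplit]
      rw [Finset.sum_add_distrib, Finset.sum_const, Finset.card_univ, Fintype.card_fin,
        nsmul_eq_mul, Finset.sum_ite_eq, if_pos (Finset.mem_univ j)]
    simp_rw [h1]
    rw [Finset.sum_const, Finset.card_univ, Fintype.card_fin, nsmul_eq_mul]
    ring
  have hE2 : ∫ ω, ‖Q ω‖^2 ∂μ
      = (k:ℝ)⁻¹ * M * (∑ l, |Y l|) + (1 - (k:ℝ)⁻¹) * ∑ l, Y l * Y l := by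
    rw [hEQ2]
    simp_rw [hval]
    rw [Finset.sum_add_distrib]
    simp only [← Finset.mul_sum]
    field_simp
  -- Hölder: ℓ¹ bound
  have hpq : Real.HolderConjugate p q := by
    rw [Real.holderConjugate_iff]
    constructor
    · exact hp1
    · rw [hq]; field_simp; ring
  have H1 : ∑ l, |Y l| ≤ (d:ℝ) ^ (1/p) * B := by
    have h := Real.inner_le_Lp_mul_Lq (Finset.univ) (fun _ : Fin d => (1:ℝ))
      (fun l => |Y l|) hpq
    simp only [one_mul, abs_one, Real.one_rpow, Finset.sum_const, Finset.card_univ,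
      Fintype.card_fin, nsmul_eq_mul, mul_one, abs_abs] at h
    exact h.trans (mul_le_mul_of_nonneg_left hY (by positivity))
  -- ℓ² bound
  have H2 : ∑ l, Y l * Y l ≤ B^2 := by
    have hqne : q ≠ 0 := ne_of_gt hq0
    have ht : 1 ≤ 2 / q := by rw [le_div_iff₀ hq0]; linarith
    have e1 : ∀ l : Fin d, Y l * Y l = (|Y l| ^ q) ^ ((2:ℝ)/q) := by
      intro l
      rw [← Real.rpow_mul (abs_nonneg _), show q * ((2:ℝ)/q) = 2 by field_simp,
        show ((2:ℝ)) = ((2:ℕ):ℝ) by norm_num, Real.rpow_natCast, sq_abs, pow_two]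
    calc ∑ l, Y l * Y l = ∑ l, (|Y l| ^ q) ^ ((2:ℝ)/q) :=
          Finset.sum_congr rfl fun l _ => e1 l
      _ ≤ (∑ l, |Y l| ^ q) ^ ((2:ℝ)/q) :=
          aux_sum_rpow_le _ _ (fun l => Real.rpow_nonneg (abs_nonneg _) _) ht
      _ = ((∑ l, |Y l| ^ q) ^ (1/q)) ^ (2:ℕ) := by
          rw [← Real.rpow_natCast ((∑ l, |Y l| ^ q) ^ (1/q)) 2,
            ← Real.rpow_mul (Finset.sum_nonneg fun l _ => Real.rpow_nonneg (abs_nonneg _) _)]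
          congr 1
          push_cast
          field_simp
      _ ≤ B ^ 2 := by
          have hnn : 0 ≤ (∑ l, |Y l| ^ q) ^ (1/q) :=
            Real.rpow_nonneg (Finset.sum_nonneg fun l _ => Real.rpow_nonneg (abs_nonneg _) _) _
          exact pow_le_pow_left₀ hnn hY 2
  have hd2p : (d:ℝ)^(1/p) * (d:ℝ)^(1/p) = (d:ℝ)^(2/p) := by
    rw [← Real.rpow_add hd0]; congr 1; ring
  have hsum2nonneg : 0 ≤ ∑ l, Y l * Y l := Finset.sum_nonneg fun l _ => mul_self_nonneg _
  have second : ∫ ω, ‖Q ω‖^2 ∂μ ≤ (d:ℝ)^(2/p) * B^2 / k + B^2 := by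
    rw [hE2]
    have t1 : (k:ℝ)⁻¹ * M * (∑ l, |Y l|) ≤ (d:ℝ)^(2/p) * B^2 / k := by
      have hstep : (k:ℝ)⁻¹ * M * (∑ l, |Y l|) ≤ (k:ℝ)⁻¹ * M * ((d:ℝ)^(1/p) * B) :=
        mul_le_mul_of_nonneg_left H1 (by positivity)
      refine hstep.trans_eq ?_
      rw [hMdef, ← hd2p]
      field_simp
    have t2 : (1 - (k:ℝ)⁻¹) * (∑ l, Y l * Y l) ≤ B^2 := by
      have hk1 : (1:ℝ) ≤ k := by exact_mod_cast hk
      have hinv1 : (k:ℝ)⁻¹ ≤ 1 := by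
        rw [inv_le_one_iff₀]; right; exact hk1
      have hinv0 : 0 ≤ (k:ℝ)⁻¹ := by positivity
      calc (1 - (k:ℝ)⁻¹) * (∑ l, Y l * Y l) ≤ 1 * B^2 :=
            mul_le_mul (by linarith) H2 hsum2nonneg zero_le_one
        _ = B^2 := one_mul _
    linarith
  refine ⟨hEQ, second, ?_⟩
  have heq : (d:ℝ)^(2/p) * B^2 / k = B^2 := by rw [← hkd]; field_simp
  calc ∫ ω, ‖Q ω‖^2 ∂μ ≤ (d:ℝ)^(2/p) * B^2 / k + B^2 := second
    _ = 2 * B^2 := by rw [heq]; ring
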